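/- If D = Rest_{y=0} ∘ (D₁, D₂) satisfies the functional identity (D F^∨_λ)(x) = |x|^{-2ν}(D F)(-1/x) for all smooth ℂ²-valued F, then the dual operator D^∨ := Rest_{y=0} ∘ (−D₂, D₁) also satisfies the same functional identity for all such F. -/
import Mathlib


noncomputable section

/-- Twisted inversion for `ℂ²`-valued functions on `ℝ² \ {(0,0)}`. -/
def IsTwInv (lam : ℂ) (F Fv : ℝ × ℝ → ℂ × ℂ) : Prop :=
  ∀ r θ : ℝ, 0 < r →
    Fv (r * Real.cos θ, r * Real.sin θ) =
      ((r : ℂ) ^ (-2 * lam)) •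
        (((Real.cos (2 * θ) : ℂ) * (F (-Real.cos θ / r, Real.sin θ / r)).1
            - (Real.sin (2 * θ) : ℂ) * (F (-Real.cos θ / r, Real.sin θ / r)).2,
          (Real.sin (2 * θ) : ℂ) * (F (-Real.cos θ / r, Real.sin θ / r)).1
            + (Real.cos (2 * θ) : ℂ) * (F (-Real.cos θ / r, Real.sin θ / r)).2) : ℂ × ℂ)

/-- If `D = Rest_{y=0} ∘ (D₁, D₂)` satisfies the functional identity
`(D F^∨_λ)(x) = |x|^{-2ν} (D F)(-1/x)` for all `F`, then so does
`D^∨ = Rest_{y=0} ∘ (−D₂, D₁)`. -/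
theorem dual_operator_satisfies_identity (lam nu : ℂ)
    (D₁ D₂ : ((ℝ × ℝ) → ℂ) →ₗ[ℂ] ((ℝ × ℝ) → ℂ))
    (h : ∀ f g : (ℝ × ℝ) → ℂ, ∀ Fv : ℝ × ℝ → ℂ × ℂ,
      IsTwInv lam (fun p => (f p, g p)) Fv →
      ∀ x : ℝ, x ≠ 0 →
        D₁ (fun p => (Fv p).1) (x, 0) + D₂ (fun p => (Fv p).2) (x, 0)
          = ((|x| : ℝ) : ℂ) ^ (-2 * nu) * (D₁ f (-1 / x, 0) + D₂ g (-1 / x, 0))) :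
    ∀ f g : (ℝ × ℝ) → ℂ, ∀ Fv : ℝ × ℝ → ℂ × ℂ,
      IsTwInv lam (fun p => (f p, g p)) Fv →
      ∀ x : ℝ, x ≠ 0 →
        -(D₂ (fun p => (Fv p).1) (x, 0)) + D₁ (fun p => (Fv p).2) (x, 0)
          = ((|x| : ℝ) : ℂ) ^ (-2 * nu) * (-(D₂ f (-1 / x, 0)) + D₁ g (-1 / x, 0)) := by
  intro f g Fv hF x hx
  have hinv : IsTwInv lam (fun p => (g p, -f p)) (fun p => ((Fv p).2, -(Fv p).1)) := by
    intro r θ hr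
    have := hF r θ hr
    rw [Prod.ext_iff] at this ⊢
    obtain ⟨h1, h2⟩ := this
    constructor
    · simp only [h2, Prod.smul_fst, Prod.smul_snd, smul_eq_mul]
      ring
    · simp only [h1, Prod.smul_fst, Prod.smul_snd, smul_eq_mul]
      ring
  have key := h g (fun p => -f p) (fun p => ((Fv p).2, -(Fv p).1)) hinv x hx
  have hneg : D₂ (fun p => -(f p)) = -(D₂ f) := by
    rw [← map_neg]; rfl
  have hneg2 : D₂ (fun p => -((Fv p).1)) = -(D₂ (fun p => (Fv p).1)) := by
    rw [← map_neg]; rfl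
  simp only [hneg, hneg2, Pi.neg_apply] at key
  linear_combination key
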